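/- For ρ > 0 and τ > 0 with τ not a multiple of 2π, letting u_j = 2ρ/((2πj)² + ρ²) and λ = 2ρ/(τ² + ρ²), the infinite series identity Σ_{j=1}^∞ u_j²/(u_j - λ) = (ρ/(2τ))·cot(τ/2) + (1/2)·coth(ρ/2) - (2/ρ²)/((2/ρ) - λ) holds, provided λ ≠ u_j for all j. -/

import Mathlib

open Real

lemma coeff_calc (z : ℂ) (hz : ∀ n : ℤ, z ≠ 2 * π * Complex.I * n) (n : ℤ) :
    fourierCoeffOn (zero_lt_one' ℝ) (fun x : ℝ => Complex.cosh (z * (x - 1/2))) n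
      = Complex.sinh (z/2) * (2*z/(z^2 + (2*π*n)^2)) := by
  have h0 : z ≠ 0 := by simpa using hz 0
  have hc1 : z - 2*π*Complex.I*n ≠ 0 := sub_ne_zero.mpr (hz n)
  have hc2 : -z - 2*π*Complex.I*n ≠ 0 := by
    have := hz (-n)
    intro h
    apply this
    push_cast
    linear_combination -h
  rw [fourierCoeffOn_eq_integral]
  have key : ∀ x : ℝ, fourier (-n) (x : AddCircle ((1:ℝ) - 0)) • Complex.cosh (z * (x - 1/2))
      = (Complex.exp (-z/2)/2) * Complex.exp ((z - 2*π*Complex.I*n) * x)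
        + (Complex.exp (z/2)/2) * Complex.exp ((-z - 2*π*Complex.I*n) * x) := by
    intro x
    rw [fourier_coe_apply, smul_eq_mul,
      show Complex.cosh (z*(x-1/2)) = (Complex.exp (z*(x-1/2)) + Complex.exp (-(z*(x-1/2))))/2 by
        rw [eq_div_iff (two_ne_zero), mul_comm _ (2:ℂ), Complex.two_cosh]]
    push_cast
    rw [sub_zero, div_one, ← mul_div_assoc, mul_add, ← Complex.exp_add, ← Complex.exp_add,
      show 2*(π:ℂ)*Complex.I*(-(n:ℂ))*x + z*((x:ℂ)-1/2) = -z/2 + (z - 2*π*Complex.I*n)*x by ring,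
      show 2*(π:ℂ)*Complex.I*(-(n:ℂ))*x + -(z*((x:ℂ)-1/2)) = z/2 + (-z - 2*π*Complex.I*n)*x by ring,
      Complex.exp_add, Complex.exp_add]
    ring
  simp_rw [key]
  have int1 : IntervalIntegrable (fun x : ℝ => (Complex.exp (-z/2)/2) * Complex.exp ((z - 2*π*Complex.I*n) * x)) MeasureTheory.volume 0 1 :=
    (Continuous.intervalIntegrable (by fun_prop) 0 1)
  have int2 : IntervalIntegrable (fun x : ℝ => (Complex.exp (z/2)/2) * Complex.exp ((-z - 2*π*Complex.I*n) * x)) MeasureTheory.volume 0 1 :=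
    (Continuous.intervalIntegrable (by fun_prop) 0 1)
  rw [intervalIntegral.integral_add int1 int2]
  rw [intervalIntegral.integral_const_mul, intervalIntegral.integral_const_mul,
    integral_exp_mul_complex hc1, integral_exp_mul_complex hc2]
  have e1 : Complex.exp ((z - 2*π*Complex.I*n) * ((1:ℝ):ℂ)) = Complex.exp z := by
    push_cast
    rw [mul_one, show z - 2*π*Complex.I*n = z + (-n:ℤ) * (2*π*Complex.I) by push_cast; ring,
      Complex.exp_add, Complex.exp_int_mul_two_pi_mul_I, mul_one]
  have e2 : Complex.exp ((-z - 2*π*Complex.I*n) * ((1:ℝ):ℂ)) = Complex.exp (-z) := by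
    push_cast
    rw [mul_one, show -z - 2*π*Complex.I*n = -z + (-n:ℤ) * (2*π*Complex.I) by push_cast; ring,
      Complex.exp_add, Complex.exp_int_mul_two_pi_mul_I, mul_one]
  rw [e1, e2]
  rw [show ((0:ℝ):ℂ) = 0 by norm_num, mul_zero, mul_zero, Complex.exp_zero]
  have hprod : z^2 + (2*(π:ℂ)*n)^2 = (z - 2*π*Complex.I*n) * -(-z - 2*π*Complex.I*n) := by
    have hI : (Complex.I)^2 = -1 := Complex.I_sq
    linear_combination (4*(π:ℂ)^2*(n:ℂ)^2) * hI
  have hsum : z^2 + (2*(π:ℂ)*(n:ℂ))^2 ≠ 0 := by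
    rw [hprod]; exact mul_ne_zero hc1 (neg_ne_zero.mpr hc2)
  rw [show Complex.sinh (z/2) = (Complex.exp (z/2) - Complex.exp (-(z/2)))/2 by
    rw [eq_div_iff (two_ne_zero), mul_comm _ (2:ℂ), Complex.two_sinh]]
  have hE : Complex.exp (z/2) ≠ 0 := Complex.exp_ne_zero _
  rw [show Complex.exp z = Complex.exp (z/2) * Complex.exp (z/2) by rw [← Complex.exp_add]; ring_nf,
    show Complex.exp (-z) = Complex.exp (-(z/2)) * Complex.exp (-(z/2)) by rw [← Complex.exp_add]; ring_nf,
    show Complex.exp (-(z/2)) = (Complex.exp (z/2))⁻¹ by rw [← Complex.exp_neg],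
    show Complex.exp (-z/2) = (Complex.exp (z/2))⁻¹ by rw [← Complex.exp_neg]; ring_nf]
  rw [show ((1:ℝ)/(1-0)) = 1 by norm_num, one_smul, hprod]
  have hc2' : -(-z - 2*π*Complex.I*(n:ℂ)) ≠ 0 := neg_ne_zero.mpr hc2
  rw [div_mul_div_comm, div_mul_div_comm, div_add_div _ _ (mul_ne_zero two_ne_zero hc1)
      (mul_ne_zero two_ne_zero hc2), div_mul_div_comm,
    div_eq_div_iff (mul_ne_zero (mul_ne_zero two_ne_zero hc1) (mul_ne_zero two_ne_zero hc2))
      (mul_ne_zero two_ne_zero (mul_ne_zero hc1 hc2'))]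
  field_simp
  ring

lemma key_hasSum (z : ℂ) (hz : ∀ n : ℤ, z ≠ 2 * π * Complex.I * n) :
    HasSum (fun n : ℤ => Complex.sinh (z/2) * (2*z/(z^2 + (2*π*n)^2)))
      (Complex.cosh (z/2)) := by
  haveI : Fact ((0:ℝ) < 1) := ⟨zero_lt_one⟩
  set f : ℝ → ℂ := fun x => Complex.cosh (z * (x - 1/2)) with hf
  have hend : f 0 = f 1 := by
    show Complex.cosh (z * (((0:ℝ):ℂ) - 1/2)) = Complex.cosh (z * (((1:ℝ):ℂ) - 1/2))
    push_cast
    rw [show z * ((0:ℂ) - 1/2) = -(z * (1 - 1/2)) by ring, Complex.cosh_neg]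
  have hcont : ContinuousOn f (Set.Icc 0 1) := (Complex.continuous_cosh.comp (by fun_prop)).continuousOn
  set G : C(AddCircle (1:ℝ), ℂ) := ⟨AddCircle.liftIco 1 0 f, AddCircle.liftIco_zero_continuous hend hcont⟩ with hG
  have hcoeff : ∀ n : ℤ, fourierCoeff (⇑G) n = Complex.sinh (z/2) * (2*z/(z^2 + (2*π*n)^2)) := by
    intro n
    have : fourierCoeff (⇑G) n = fourierCoeff (AddCircle.liftIco 1 0 f) n := rfl
    rw [this, fourierCoeff_liftIco_eq]
    simp only [zero_add]
    exact coeff_calc z hz n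
  -- summability
  have hsumm : Summable (fun n : ℤ => Complex.sinh (z/2) * (2*z/(z^2 + (2*π*n)^2))) := by
    apply Summable.mul_left
    apply Summable.of_norm_bounded_eventually (g := fun n : ℤ => 2*‖z‖ * (1/(n:ℝ)^2))
      (((summable_one_div_int_pow (p := 2)).mpr one_lt_two).mul_left _)
    have hfin : {n : ℤ | ¬ (‖z‖^2 + 1 ≤ (n:ℝ)^2)}.Finite := by
      apply Set.Finite.subset (Set.finite_Icc (-(⌈‖z‖⌉ + 1)) (⌈‖z‖⌉ + 1))
      intro n hn
      simp only [Set.mem_setOf_eq, not_le] at hn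
      have ha : ((|n|:ℤ):ℝ) = |(n:ℝ)| := by push_cast; rfl
      have h1 : |(n:ℝ)| ≤ ‖z‖ + 1 := by
        nlinarith [abs_nonneg (n:ℝ), norm_nonneg z, _root_.sq_abs (n:ℝ)]
      have h2 : |n| ≤ ⌈‖z‖⌉ + 1 := by
        have hc := Int.le_ceil ‖z‖
        have : ((|n|:ℤ):ℝ) ≤ ((⌈‖z‖⌉ + 1 : ℤ):ℝ) := by push_cast; rw [← ha] at h1; push_cast at h1; linarith
        exact_mod_cast this
      constructor <;> [exact neg_le_of_abs_le h2; exact le_of_abs_le h2]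
    filter_upwards [hfin.eventually_cofinite_notMem] with n hn
    simp only [Set.mem_setOf_eq, not_not] at hn
    have hn2 : (0:ℝ) < (n:ℝ)^2 := by nlinarith [norm_nonneg z]
    have hnorm1 : ‖(2*(π:ℂ)*(n:ℂ))^2‖ = (2*π*(n:ℝ))^2 := by
      rw [show (2*(π:ℂ)*(n:ℂ)) = (((2*π*(n:ℝ)):ℝ):ℂ) by push_cast; ring, norm_pow,
        Complex.norm_real, Real.norm_eq_abs, _root_.sq_abs]
    have hden : (n:ℝ)^2 ≤ ‖z^2 + (2*(π:ℂ)*(n:ℂ))^2‖ := by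
      have hlb : ‖(2*(π:ℂ)*(n:ℂ))^2‖ - ‖-(z^2)‖ ≤ ‖(2*(π:ℂ)*(n:ℂ))^2 - (-(z^2))‖ :=
        norm_sub_norm_le _ _
      rw [sub_neg_eq_add, norm_neg, hnorm1, norm_pow] at hlb
      have hpi := Real.pi_gt_three
      have hpi2 : (9:ℝ) < π^2 := by nlinarith
      have : (n:ℝ)^2 ≤ (2*π*(n:ℝ))^2 - ‖z‖^2 := by
        nlinarith [mul_nonneg (by nlinarith : (0:ℝ) ≤ 4*π^2 - 2) (sq_nonneg (n:ℝ))]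
      calc (n:ℝ)^2 ≤ (2*π*(n:ℝ))^2 - ‖z‖^2 := this
        _ ≤ ‖(2*(π:ℂ)*(n:ℂ))^2 + z^2‖ := hlb
        _ = ‖z^2 + (2*(π:ℂ)*(n:ℂ))^2‖ := by rw [add_comm]
    rw [norm_div, norm_mul]
    rw [show ‖(2:ℂ)‖ = 2 by norm_num]
    calc 2*‖z‖/‖z^2 + (2*(π:ℂ)*(n:ℂ))^2‖ ≤ 2*‖z‖/(n:ℝ)^2 := by
          apply div_le_div_of_nonneg_left (by positivity) hn2 hden
      _ = 2*‖z‖*(1/(n:ℝ)^2) := by ring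
  -- conclude
  have hsum2 : Summable (fourierCoeff (⇑G)) := hsumm.congr (fun n => (hcoeff n).symm)
  have hp := has_pointwise_sum_fourier_series_of_summable hsum2 (0 : AddCircle (1:ℝ))
  simp only [fourier_eval_zero, smul_eq_mul, mul_one, hcoeff] at hp
  have hG0 : G (0 : AddCircle (1:ℝ)) = Complex.cosh (z/2) := by
    show AddCircle.liftIco 1 0 f (((0:ℝ)) : AddCircle (1:ℝ)) = _
    rw [AddCircle.liftIco_zero_coe_apply (by norm_num : (0:ℝ) ∈ Set.Ico (0:ℝ) 1)]
    show Complex.cosh (z * (((0:ℝ):ℂ) - 1/2)) = _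
    push_cast
    rw [show z * ((0:ℂ) - 1/2) = -(z/2) by ring, Complex.cosh_neg]
  rwa [hG0] at hp

lemma int_to_nat_shifted {g : ℤ → ℝ} {S : ℝ} (h : HasSum g S)
    (heven : ∀ n : ℕ, g (-(n:ℤ)) = g (n:ℤ)) :
    HasSum (fun j : ℕ => g ((j:ℤ)+1)) ((S - g 0)/2) := by
  have h1 : HasSum (fun n : ℕ => g (n:ℤ) + g (-(n:ℤ))) (S + g 0) := h.nat_add_neg
  have h2 : HasSum (fun n : ℕ => 2 * g (n:ℤ)) (S + g 0) :=
    h1.congr_fun (fun n => by rw [heven]; ring)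
  have h3 : HasSum (fun n : ℕ => g (n:ℤ)) ((S + g 0)/2) := by
    have := h2.div_const 2
    exact this.congr_fun (fun n => by ring)
  have h4 := (hasSum_nat_add_iff (f := fun n : ℕ => g (n:ℤ)) 1).mpr
    (by rw [show (S - g 0)/2 + ∑ i ∈ Finset.range 1, g (i:ℤ) = (S + g 0)/2 by
          rw [Finset.sum_range_one]; push_cast; ring]
        exact h3)
  exact h4.congr_fun (fun n => by push_cast; ring_nf)

lemma corA (ρ : ℝ) (hρ : 0 < ρ) :
    HasSum (fun j : ℕ => 2*ρ/((2*π*((j:ℝ)+1))^2 + ρ^2))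
      (Real.cosh (ρ/2)/Real.sinh (ρ/2)/2 - 1/ρ) := by
  have hz : ∀ n : ℤ, (ρ:ℂ) ≠ 2 * π * Complex.I * n := by
    intro n h
    have him := congrArg Complex.im h
    have hre := congrArg Complex.re h
    simp [Complex.mul_im, Complex.mul_re] at him hre
    exact hρ.ne' hre
  have hkey := key_hasSum (ρ:ℂ) hz
  have hterm : ∀ n : ℤ, Complex.sinh ((ρ:ℂ)/2) * (2*(ρ:ℂ)/((ρ:ℂ)^2 + (2*(π:ℂ)*(n:ℂ))^2))
      = ((Real.sinh (ρ/2) * (2*ρ/(ρ^2 + (2*π*(n:ℝ))^2)) : ℝ) : ℂ) := by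
    intro n
    push_cast [Complex.ofReal_sinh]
    ring
  rw [show Complex.cosh ((ρ:ℂ)/2) = ((Real.cosh (ρ/2) : ℝ) : ℂ) by push_cast [Complex.ofReal_cosh]; ring_nf] at hkey
  have hkey2 : HasSum (fun n : ℤ => Real.sinh (ρ/2) * (2*ρ/(ρ^2 + (2*π*(n:ℝ))^2))) (Real.cosh (ρ/2)) := by
    rw [← Complex.hasSum_ofReal]
    exact (hkey.congr_fun (fun n => (hterm n).symm))
  have h5 := int_to_nat_shifted hkey2 (fun n => by push_cast; ring_nf)
  have hs : Real.sinh (ρ/2) ≠ 0 := Real.sinh_ne_zero.mpr (by positivity)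
  have h6 := h5.mul_left (Real.sinh (ρ/2))⁻¹
  have hval : (Real.sinh (ρ/2))⁻¹ * ((Real.cosh (ρ/2) - Real.sinh (ρ/2) * (2*ρ/(ρ^2 + (2*π*((0:ℤ):ℝ))^2)))/2)
      = Real.cosh (ρ/2)/Real.sinh (ρ/2)/2 - 1/ρ := by
    push_cast
    field_simp
    ring
  rw [← hval]
  exact h6.congr_fun (fun j => by push_cast; field_simp; ring)

lemma corB (ρ τ : ℝ) (hτ : 0 < τ) (hτ2 : ∀ j : ℕ, τ ≠ 2 * π * j) :
    HasSum (fun j : ℕ => 2*ρ/(τ^2 - (2*π*((j:ℝ)+1))^2))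
      (ρ/(2*τ) * (Real.cos (τ/2)/Real.sin (τ/2)) - ρ/τ^2) := by
  have hsin : Real.sin (τ/2) ≠ 0 := by
    intro h
    rcases Real.sin_eq_zero_iff.mp h with ⟨n, hn⟩
    have hn' : τ = 2 * π * n := by linarith
    have hnpos : 0 < n := by
      by_contra hle
      push_neg at hle
      have : (n:ℝ) ≤ 0 := by exact_mod_cast hle
      nlinarith [Real.pi_pos]
    exact hτ2 n.toNat (by rw [hn']; congr 1; exact_mod_cast (Int.toNat_of_nonneg hnpos.le).symm)
  have hz : ∀ n : ℤ, (τ:ℂ) * Complex.I ≠ 2 * π * Complex.I * n := by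
    intro n h
    have h2 : (τ:ℂ) = 2*π*n := by
      linear_combination (-Complex.I) * h + ((τ:ℂ) - 2*(π:ℂ)*(n:ℂ)) * Complex.I_sq
    have h3 : τ = 2*π*(n:ℝ) := by exact_mod_cast h2
    have hnpos : 0 < n := by
      by_contra hle
      push_neg at hle
      have : (n:ℝ) ≤ 0 := by exact_mod_cast hle
      nlinarith [Real.pi_pos]
    exact hτ2 n.toNat (by rw [h3]; congr 1; exact_mod_cast (Int.toNat_of_nonneg hnpos.le).symm)
  have hkey := key_hasSum ((τ:ℂ) * Complex.I) hz
  have hterm : ∀ n : ℤ, Complex.sinh ((τ:ℂ)*Complex.I/2) * (2*((τ:ℂ)*Complex.I)/(((τ:ℂ)*Complex.I)^2 + (2*(π:ℂ)*(n:ℂ))^2))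
      = ((2*τ*Real.sin (τ/2)/(τ^2 - (2*π*(n:ℝ))^2) : ℝ) : ℂ) := by
    intro n
    rw [show (τ:ℂ)*Complex.I/2 = ((τ:ℂ)/2)*Complex.I by ring, Complex.sinh_mul_I]
    by_cases hd : (τ:ℝ)^2 - (2*π*(n:ℝ))^2 = 0
    · have hdc : ((τ:ℂ)*Complex.I)^2 + (2*(π:ℂ)*(n:ℂ))^2 = 0 := by
        have hdc' : ((τ:ℂ))^2 - (2*(π:ℂ)*(n:ℂ))^2 = 0 := by exact_mod_cast congrArg (Complex.ofReal) hd
        linear_combination -hdc' + (τ:ℂ)^2 * Complex.I_sq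
      rw [hdc, div_zero, mul_zero, hd, div_zero, Complex.ofReal_zero]
    · have hdc : ((τ:ℂ))^2 - (2*(π:ℂ)*(n:ℂ))^2 ≠ 0 := by
        have := Complex.ofReal_ne_zero.mpr hd
        push_cast at this
        convert this using 2
      have hdc2 : ((τ:ℂ)*Complex.I)^2 + (2*(π:ℂ)*(n:ℂ))^2 = -((τ:ℂ)^2 - (2*(π:ℂ)*(n:ℂ))^2) := by
        linear_combination (τ:ℂ)^2 * Complex.I_sq
      rw [hdc2]
      push_cast [Complex.ofReal_sin]
      rw [div_neg, mul_neg, neg_eq_iff_eq_neg, ← mul_div_assoc, ← neg_div,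
        div_eq_div_iff hdc hdc]
      linear_combination (2*(τ:ℂ)*Complex.sin ((τ:ℂ)/2)*((τ:ℂ)^2-(2*(π:ℂ)*(n:ℂ))^2)) * Complex.I_sq
  rw [show Complex.cosh ((τ:ℂ)*Complex.I/2) = ((Real.cos (τ/2) : ℝ) : ℂ) by
    rw [show (τ:ℂ)*Complex.I/2 = ((τ:ℂ)/2)*Complex.I by ring, Complex.cosh_mul_I]
    push_cast [Complex.ofReal_cos]
    ring_nf] at hkey
  have hkey2 : HasSum (fun n : ℤ => 2*τ*Real.sin (τ/2)/(τ^2 - (2*π*(n:ℝ))^2)) (Real.cos (τ/2)) := by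
    rw [← Complex.hasSum_ofReal]
    exact (hkey.congr_fun (fun n => (hterm n).symm))
  have h5 := int_to_nat_shifted hkey2 (fun n => by push_cast; ring_nf)
  have h6 := h5.mul_left (ρ/(τ*Real.sin (τ/2)))
  have hval : (ρ/(τ*Real.sin (τ/2))) * ((Real.cos (τ/2) - 2*τ*Real.sin (τ/2)/(τ^2 - (2*π*((0:ℤ):ℝ))^2))/2)
      = ρ/(2*τ) * (Real.cos (τ/2)/Real.sin (τ/2)) - ρ/τ^2 := by
    push_cast
    field_simp
    ring
  rw [← hval]
  have hd : ∀ j : ℕ, τ^2 - (2*π*((j:ℝ)+1))^2 ≠ 0 := by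
    intro j h
    have hb : 0 < 2*π*((j:ℝ)+1) := by positivity
    have hfac : (τ - 2*π*((j:ℝ)+1))*(τ + 2*π*((j:ℝ)+1)) = 0 := by linear_combination h
    rcases mul_eq_zero.mp hfac with h1 | h1
    · exact hτ2 (j+1) (by push_cast; linarith)
    · linarith
  exact h6.congr_fun (fun j => by
    push_cast
    rw [div_mul_div_comm,
      div_eq_div_iff (hd j) (mul_ne_zero (mul_ne_zero hτ.ne' hsin) (hd j))]
    ring)

theorem series_identity_A1 (ρ τ : ℝ) (hρ : 0 < ρ) (hτ : 0 < τ)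
    (hτ2 : ∀ j : ℕ, τ ≠ 2 * π * j)
    (u : ℕ → ℝ) (hu : ∀ j, u j = 2 * ρ / ((2 * π * j) ^ 2 + ρ ^ 2))
    (lam : ℝ) (hlam : lam = 2 * ρ / (τ ^ 2 + ρ ^ 2))
    (hne : ∀ j : ℕ, 1 ≤ j → lam ≠ u j) :
    ∑' j : ℕ, (u (j + 1)) ^ 2 / (u (j + 1) - lam)
      = ρ / (2 * τ) * (Real.cos (τ / 2) / Real.sin (τ / 2))
        + (Real.cosh (ρ / 2) / Real.sinh (ρ / 2)) / 2
        - (2 / ρ ^ 2) / (2 / ρ - lam) := by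
  have hπ := Real.pi_pos
  have hA := corA ρ hρ
  have hB := corB ρ τ hτ hτ2
  have hd : ∀ j : ℕ, τ^2 - (2*π*((j:ℝ)+1))^2 ≠ 0 := by
    intro j h
    have hb : 0 < 2*π*((j:ℝ)+1) := by positivity
    have hfac : (τ - 2*π*((j:ℝ)+1))*(τ + 2*π*((j:ℝ)+1)) = 0 := by linear_combination h
    rcases mul_eq_zero.mp hfac with h1 | h1
    · exact hτ2 (j+1) (by push_cast; linarith)
    · linarith
  have hsum := hA.add hB
  have hterm : ∀ j : ℕ, (u (j+1))^2/(u (j+1) - lam)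
      = 2*ρ/((2*π*((j:ℝ)+1))^2 + ρ^2) + 2*ρ/(τ^2 - (2*π*((j:ℝ)+1))^2) := by
    intro j
    have hne' : u (j+1) - lam ≠ 0 := sub_ne_zero.mpr (fun h => hne (j+1) (by omega) h.symm)
    have e1 : u (j+1) = 2*ρ/((2*π*((j:ℝ)+1))^2 + ρ^2) := by rw [hu]; push_cast; ring_nf
    rw [e1, hlam] at hne' ⊢
    have h1 : ((2*π*((j:ℝ)+1))^2 + ρ^2) ≠ 0 := by positivity
    have h2 : (τ^2 + ρ^2) ≠ 0 := by positivity
    have h3 := hd j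
    have hsub : 2*ρ/((2*π*((j:ℝ)+1))^2+ρ^2) - 2*ρ/(τ^2+ρ^2)
        = 2*ρ*(τ^2 - (2*π*((j:ℝ)+1))^2)/(((2*π*((j:ℝ)+1))^2+ρ^2) * (τ^2+ρ^2)) := by
      rw [div_sub_div _ _ h1 h2]
      congr 1
      ring
    rw [hsub]
    field_simp
    have h3' : τ ^ 2 - 2 ^ 2 * π ^ 2 * ((j:ℝ) + 1) ^ 2 ≠ 0 := by rw [← mul_pow, ← mul_pow]; exact h3
    rw [one_add_div h3']
    ring
  have hfinal := (hsum.congr_fun hterm).tsum_eq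
  rw [hfinal]
  have heq : 2/ρ - lam = 2*τ^2/(ρ*(τ^2+ρ^2)) := by
    rw [hlam]
    field_simp
    ring
  rw [heq]
  have h2 : (τ^2 + ρ^2) ≠ 0 := by positivity
  field_simp
  ring
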